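/- arXiv:1311.0268 — 2 statements merged into one kernel-verified Lean document; each statement's English description precedes it below -/
import Mathlib

section
/- For y ∈ [0,1], the function h(q,y) := 1/√(1-q²) - y³/√(1-q²y²) - (3/2)·(f(qy) - f(q))/q³ satisfies h(q,y) ≥ 0 for all q ∈ (0,1) (with strict inequality when y < 1). -/
noncomputable def f (x : ℝ) : ℝ := x * Real.sqrt (1 - x ^ 2) + Real.arccos x

noncomputable def h (q y : ℝ) : ℝ :=
  1 / Real.sqrt (1 - q ^ 2) - y ^ 3 / Real.sqrt (1 - q ^ 2 * y ^ 2)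
    - (3 / 2) * ((f (q * y) - f q) / q ^ 3)

open Real

lemma hasDerivAt_f {x : ℝ} (hx : x ^ 2 < 1) :
    HasDerivAt f (-2 * x ^ 2 / Real.sqrt (1 - x ^ 2)) x := by
  have hpos : (0 : ℝ) < 1 - x ^ 2 := by linarith
  have hs : 0 < Real.sqrt (1 - x ^ 2) := Real.sqrt_pos.2 hpos
  have hs2 : Real.sqrt (1 - x ^ 2) ^ 2 = 1 - x ^ 2 := Real.sq_sqrt hpos.le
  have h1 : x ≠ 1 := by nlinarith
  have h2 : x ≠ -1 := by nlinarith
  have hinner : HasDerivAt (fun y : ℝ => 1 - y ^ 2) (-(2 * x)) x := by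
    simpa using ((hasDerivAt_pow 2 x).const_sub 1)
  have hsqrt : HasDerivAt (fun y : ℝ => Real.sqrt (1 - y ^ 2))
      (1 / (2 * Real.sqrt (1 - x ^ 2)) * (-(2 * x))) x :=
    (Real.hasDerivAt_sqrt hpos.ne').comp x hinner
  have hmul : HasDerivAt (fun y : ℝ => y * Real.sqrt (1 - y ^ 2))
      (1 * Real.sqrt (1 - x ^ 2) + x * (1 / (2 * Real.sqrt (1 - x ^ 2)) * (-(2 * x)))) x :=
    (hasDerivAt_id x).mul hsqrt
  have harccos := Real.hasDerivAt_arccos h2 h1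
  have hsum := hmul.add harccos
  refine hsum.congr_deriv ?_
  field_simp
  nlinarith [hs, hs2]

lemma hasDerivAt_h {q y : ℝ} (hq : q ∈ Set.Ioo (0 : ℝ) 1) (hy : q ^ 2 * y ^ 2 < 1) :
    HasDerivAt (h q) (-(q ^ 2 * y ^ 4) / Real.sqrt (1 - q ^ 2 * y ^ 2) ^ 3) y := by
  obtain ⟨hq0, hq1⟩ := hq
  have hpos : (0 : ℝ) < 1 - q ^ 2 * y ^ 2 := by linarith
  have hs : 0 < Real.sqrt (1 - q ^ 2 * y ^ 2) := Real.sqrt_pos.2 hpos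
  have hs2 : Real.sqrt (1 - q ^ 2 * y ^ 2) ^ 2 = 1 - q ^ 2 * y ^ 2 := Real.sq_sqrt hpos.le
  -- derivative of y ↦ √(1 - q²y²)
  have hinner : HasDerivAt (fun t : ℝ => 1 - q ^ 2 * t ^ 2) (-(q ^ 2 * (2 * y))) y := by
    have : HasDerivAt (fun t : ℝ => q ^ 2 * t ^ 2) (q ^ 2 * (2 * y)) y := by
      simpa using ((hasDerivAt_pow 2 y).const_mul (q ^ 2))
    simpa using this.const_sub 1
  have hsqrt : HasDerivAt (fun t : ℝ => Real.sqrt (1 - q ^ 2 * t ^ 2))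
      (1 / (2 * Real.sqrt (1 - q ^ 2 * y ^ 2)) * (-(q ^ 2 * (2 * y)))) y :=
    (Real.hasDerivAt_sqrt hpos.ne').comp y hinner
  -- derivative of y ↦ y³/√(1 - q²y²)
  have hA : HasDerivAt (fun t : ℝ => t ^ 3 / Real.sqrt (1 - q ^ 2 * t ^ 2))
      ((3 * y ^ 2 * Real.sqrt (1 - q ^ 2 * y ^ 2) -
        y ^ 3 * (1 / (2 * Real.sqrt (1 - q ^ 2 * y ^ 2)) * (-(q ^ 2 * (2 * y))))) /
        Real.sqrt (1 - q ^ 2 * y ^ 2) ^ 2) y := by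
    have h3 : HasDerivAt (fun t : ℝ => t ^ 3) (3 * y ^ 2) y := by
      simpa using hasDerivAt_pow 3 y
    exact h3.div hsqrt hs.ne'
  -- derivative of y ↦ f (q*y)
  have hfq : HasDerivAt (fun t : ℝ => f (q * t))
      (-2 * (q * y) ^ 2 / Real.sqrt (1 - (q * y) ^ 2) * q) y := by
    have hx : (q * y) ^ 2 < 1 := by rw [mul_pow]; linarith
    exact (hasDerivAt_f hx).comp y (by simpa using (hasDerivAt_id y).const_mul q)
  -- derivative of y ↦ (3/2) * ((f (q*y) - f q)/q³)
  have hB : HasDerivAt (fun t : ℝ => (3 / 2) * ((f (q * t) - f q) / q ^ 3))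
      ((3 / 2) * ((-2 * (q * y) ^ 2 / Real.sqrt (1 - (q * y) ^ 2) * q) / q ^ 3)) y := by
    exact (((hfq.sub_const (f q)).div_const (q ^ 3)).const_mul (3 / 2))
  have htot := ((hasDerivAt_const y (1 / Real.sqrt (1 - q ^ 2))).sub hA).sub hB
  refine htot.congr_deriv ?_
  have hqy : (q * y) ^ 2 = q ^ 2 * y ^ 2 := by ring
  rw [hqy]
  have hq3 : q ^ 3 ≠ 0 := by positivity
  set s := Real.sqrt (1 - q ^ 2 * y ^ 2) with hsdef
  field_simp
  ring

theorem h_nonneg :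
    ∀ q ∈ Set.Ioo (0 : ℝ) 1, ∀ y ∈ Set.Icc (0 : ℝ) 1,
      0 ≤ h q y ∧ (y < 1 → 0 < h q y) := by
  intro q hq y hy
  obtain ⟨hq0, hq1⟩ := hq
  have hbound : ∀ t : ℝ, t ∈ Set.Icc (0 : ℝ) 1 → q ^ 2 * t ^ 2 < 1 := by
    intro t ht
    have h1 : q ^ 2 < 1 := by nlinarith
    have h2 : t ^ 2 ≤ 1 := by nlinarith [ht.1, ht.2]
    nlinarith [sq_nonneg q]
  have key : StrictAntiOn (h q) (Set.Icc 0 1) := by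
    apply strictAntiOn_of_deriv_neg (convex_Icc 0 1)
    · intro t ht
      exact (hasDerivAt_h ⟨hq0, hq1⟩ (hbound t ht)).continuousAt.continuousWithinAt
    · intro t ht
      rw [interior_Icc] at ht
      rw [(hasDerivAt_h ⟨hq0, hq1⟩ (hbound t ⟨ht.1.le, ht.2.le⟩)).deriv]
      have hs : 0 < Real.sqrt (1 - q ^ 2 * t ^ 2) :=
        Real.sqrt_pos.2 (by linarith [hbound t ⟨ht.1.le, ht.2.le⟩])
      have ht0 : 0 < t := ht.1
      have : 0 < q ^ 2 * t ^ 4 := by positivity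
      have : 0 < Real.sqrt (1 - q ^ 2 * t ^ 2) ^ 3 := by positivity
      rw [div_neg_iff]
      right
      exact ⟨by linarith, ‹0 < Real.sqrt (1 - q ^ 2 * t ^ 2) ^ 3›⟩
  have h1 : h q 1 = 0 := by
    simp [h, f]
  have hstrict : y < 1 → 0 < h q y := by
    intro hylt
    have := key hy (Set.mem_Icc.2 ⟨by norm_num, le_refl 1⟩) hylt
    rw [h1] at this
    exact this
  refine ⟨?_, hstrict⟩
  rcases lt_or_eq_of_le hy.2 with hlt | heq
  · exact (hstrict hlt).le
  · rw [heq, h1]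
end

section
/- Let V₀(y,R) := c(R)/y⁶ - (R c'(R) + 3c(R))/(2 y⁴ r'(y,R)) + μ² and w(y,R) := (2 y² r'(y,R))/(√(c(R))·√(1-q(R)²y²)·√(1-R²q(R)²c(R))). Suppose on D(ε): (i) r'(y,R) = y²A(y,R) with 1 ≤ A ≤ K for a constant K; (ii) c, c' are continuous with 0 < c_min ≤ c ≤ c_max and |c'| ≤ c'_max on [0,R(ε)]; (iii) √(1-q²y²) ≥ δ₁ > 0 and √(1-R²q²c) ≥ δ₂ > 0 on D(ε). Then there exists k > 0 such that |V₀(y,R)|·w(y,R) ≤ k/y² for all (y,R) ∈ D(ε). -/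
set_option maxHeartbeats 1000000

theorem V0_weighted_bound
    (Rε μ K cmin cmax c'max δ₁ δ₂ : ℝ)
    (hRε : 0 < Rε) (hK : 1 ≤ K) (hcmin : 0 < cmin) (hcc : cmin ≤ cmax)
    (hc'max : 0 ≤ c'max) (hδ₁ : 0 < δ₁) (hδ₂ : 0 < δ₂)
    (S : Set (ℝ × ℝ))
    (hS : S ⊆ {p : ℝ × ℝ | 0 < p.1 ∧ p.1 ≤ 1 ∧ 0 ≤ p.2 ∧ p.2 ≤ Rε})
    (c c' q : ℝ → ℝ) (A : ℝ × ℝ → ℝ)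
    (hccont : ContinuousOn c (Set.Icc 0 Rε)) (hc'cont : ContinuousOn c' (Set.Icc 0 Rε))
    (hcbd : ∀ R ∈ Set.Icc (0 : ℝ) Rε, cmin ≤ c R ∧ c R ≤ cmax ∧ |c' R| ≤ c'max)
    (hA : ∀ p ∈ S, 1 ≤ A p ∧ A p ≤ K)
    (hδ₁' : ∀ p ∈ S, δ₁ ≤ Real.sqrt (1 - q p.2 ^ 2 * p.1 ^ 2))
    (hδ₂' : ∀ p ∈ S, δ₂ ≤ Real.sqrt (1 - p.2 ^ 2 * q p.2 ^ 2 * c p.2)) :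
    ∃ k > (0 : ℝ), ∀ p ∈ S,
      |c p.2 / p.1 ^ 6
        - (p.2 * c' p.2 + 3 * c p.2) / (2 * p.1 ^ 4 * (p.1 ^ 2 * A p)) + μ ^ 2|
      * ((2 * p.1 ^ 2 * (p.1 ^ 2 * A p)) /
          (Real.sqrt (c p.2) * Real.sqrt (1 - q p.2 ^ 2 * p.1 ^ 2)
            * Real.sqrt (1 - p.2 ^ 2 * q p.2 ^ 2 * c p.2)))
      ≤ k / p.1 ^ 2 := by
  have hcmax : 0 < cmax := lt_of_lt_of_le hcmin hcc
  have hsc : 0 < Real.sqrt cmin := Real.sqrt_pos.mpr hcmin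
  set M : ℝ := cmax + (Rε * c'max + 3 * cmax) / 2 + μ ^ 2 + 1 with hMdef
  have hMpos : 0 < M := by positivity
  have hKpos : 0 < K := lt_of_lt_of_le one_pos hK
  refine ⟨M * (2 * K) / (Real.sqrt cmin * δ₁ * δ₂), by positivity, ?_⟩
  intro p hp
  obtain ⟨hy, hy1, hR0, hRle⟩ := hS hp
  obtain ⟨hc1, hc2, hc3⟩ := hcbd p.2 ⟨hR0, hRle⟩
  obtain ⟨hA1, hA2⟩ := hA p hp
  have hd1 := hδ₁' p hp
  have hd2 := hδ₂' p hp
  set y := p.1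
  set R := p.2
  have hy6 : (0:ℝ) < y ^ 6 := by positivity
  have hy61 : y ^ 6 ≤ 1 := pow_le_one₀ hy.le hy1
  have hApos : 0 < A p := lt_of_lt_of_le one_pos hA1
  have hcR : 0 < c R := lt_of_lt_of_le hcmin hc1
  -- bound |V₀|
  have hV : |c R / y ^ 6 - (R * c' R + 3 * c R) / (2 * y ^ 4 * (y ^ 2 * A p)) + μ ^ 2|
      ≤ M / y ^ 6 := by
    have h1 : |c R / y ^ 6| ≤ cmax / y ^ 6 := by
      rw [abs_of_nonneg (by positivity)]
      gcongr
    have hden : 2 * y ^ 6 ≤ 2 * y ^ 4 * (y ^ 2 * A p) := by nlinarith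
    have h2 : |(R * c' R + 3 * c R) / (2 * y ^ 4 * (y ^ 2 * A p))|
        ≤ ((Rε * c'max + 3 * cmax) / 2) / y ^ 6 := by
      rw [abs_div, abs_of_pos (by positivity : (0:ℝ) < 2 * y ^ 4 * (y ^ 2 * A p))]
      have hnum : |R * c' R + 3 * c R| ≤ Rε * c'max + 3 * cmax := by
        calc |R * c' R + 3 * c R| ≤ |R * c' R| + |3 * c R| := abs_add_le _ _
          _ ≤ Rε * c'max + 3 * cmax := by
              rw [abs_mul, abs_mul, abs_of_nonneg hR0, abs_of_pos hcR]
              have : |(3:ℝ)| = 3 := by norm_num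
              rw [this]
              have := mul_le_mul hRle hc3 (abs_nonneg _) hRε.le
              have h3c : 3 * c R ≤ 3 * cmax := by linarith
              linarith
      calc |R * c' R + 3 * c R| / (2 * y ^ 4 * (y ^ 2 * A p))
          ≤ (Rε * c'max + 3 * cmax) / (2 * y ^ 6) :=
            div_le_div₀ (by positivity) hnum (by positivity) hden
        _ = ((Rε * c'max + 3 * cmax) / 2) / y ^ 6 := by ring
    have h3 : |μ ^ 2| ≤ (μ ^ 2 + 1) / y ^ 6 := by
      rw [abs_of_nonneg (by positivity)]
      rw [le_div_iff₀ hy6]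
      nlinarith [sq_nonneg μ]
    calc |c R / y ^ 6 - (R * c' R + 3 * c R) / (2 * y ^ 4 * (y ^ 2 * A p)) + μ ^ 2|
        ≤ |c R / y ^ 6 - (R * c' R + 3 * c R) / (2 * y ^ 4 * (y ^ 2 * A p))| + |μ ^ 2| :=
          abs_add_le _ _
      _ ≤ |c R / y ^ 6| + |(R * c' R + 3 * c R) / (2 * y ^ 4 * (y ^ 2 * A p))| + |μ ^ 2| := by
          have := abs_sub (c R / y ^ 6) ((R * c' R + 3 * c R) / (2 * y ^ 4 * (y ^ 2 * A p)))
          linarith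
      _ ≤ cmax / y ^ 6 + ((Rε * c'max + 3 * cmax) / 2) / y ^ 6 + (μ ^ 2 + 1) / y ^ 6 := by
          linarith
      _ = M / y ^ 6 := by rw [hMdef]; ring
  -- bound the weight
  have hdenlb : Real.sqrt cmin * δ₁ * δ₂
      ≤ Real.sqrt (c R) * Real.sqrt (1 - q R ^ 2 * y ^ 2)
          * Real.sqrt (1 - R ^ 2 * q R ^ 2 * c R) := by
    have h1 : Real.sqrt cmin ≤ Real.sqrt (c R) := Real.sqrt_le_sqrt hc1
    gcongr <;> positivity
  have hw : (2 * y ^ 2 * (y ^ 2 * A p)) /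
        (Real.sqrt (c R) * Real.sqrt (1 - q R ^ 2 * y ^ 2)
          * Real.sqrt (1 - R ^ 2 * q R ^ 2 * c R))
      ≤ (2 * K * y ^ 4) / (Real.sqrt cmin * δ₁ * δ₂) := by
    refine div_le_div₀ (by positivity) (by nlinarith [pow_pos hy 4]) (by positivity) hdenlb
  have hwnn : 0 ≤ (2 * y ^ 2 * (y ^ 2 * A p)) /
        (Real.sqrt (c R) * Real.sqrt (1 - q R ^ 2 * y ^ 2)
          * Real.sqrt (1 - R ^ 2 * q R ^ 2 * c R)) := by positivity
  calc |c R / y ^ 6 - (R * c' R + 3 * c R) / (2 * y ^ 4 * (y ^ 2 * A p)) + μ ^ 2|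
      * ((2 * y ^ 2 * (y ^ 2 * A p)) /
          (Real.sqrt (c R) * Real.sqrt (1 - q R ^ 2 * y ^ 2)
            * Real.sqrt (1 - R ^ 2 * q R ^ 2 * c R)))
      ≤ (M / y ^ 6) * ((2 * K * y ^ 4) / (Real.sqrt cmin * δ₁ * δ₂)) :=
        mul_le_mul hV hw hwnn (by positivity)
    _ = (M * (2 * K) / (Real.sqrt cmin * δ₁ * δ₂)) / y ^ 2 := by
        field_simp
end
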